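/- Assume s = d_T·T_max, δ = d_T and R₀ > 1, and let (T*, I*, V*) be the unique equilibrium of the HCV system with T* > 0, I* > 0, V* > 0. Then every complex eigenvalue of the Jacobian matrix of the HCV vector field at (T*, I*, V*) has negative real part; in particular, the infected equilibrium is locally asymptotically stable. -/

import Mathlib

set_option maxHeartbeats 1000000

open Set Matrix

private lemma hcv_pos_left_of_mul {a b : ℝ} (hb : 0 < b) (h : 0 < a * b) : 0 < a := by
  rcases mul_pos_iff.1 h with ⟨h1, _⟩ | ⟨_, h2⟩
  · exact h1
  · linarith

/-- Routh–Hurwitz criterion for a cubic polynomial. -/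
private lemma hcv_routh_hurwitz_cubic (a b c : ℝ) (ha : 0 < a) (hc : 0 < c)
    (hab : c < a * b)
    (z : ℂ) (hz : z^3 + (a:ℂ)*z^2 + (b:ℂ)*z + (c:ℂ) = 0) : z.re < 0 := by
  by_contra hre
  push_neg at hre
  have hb : 0 < b := by nlinarith
  have h1 : (z ^ 3 + (a:ℂ)*z ^ 2 + (b:ℂ)*z + (c:ℂ)).re = 0 := by rw [hz]; simp
  have h2 : (z ^ 3 + (a:ℂ)*z ^ 2 + (b:ℂ)*z + (c:ℂ)).im = 0 := by rw [hz]; simp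
  simp only [pow_succ, pow_zero, one_mul, Complex.add_re, Complex.add_im,
    Complex.mul_re, Complex.mul_im, Complex.ofReal_re, Complex.ofReal_im] at h1 h2
  set x := z.re with hx
  set y := z.im with hy
  rcases eq_or_ne y 0 with h | h
  · rw [h] at h1
    nlinarith [mul_nonneg (mul_nonneg hre hre) hre, mul_nonneg hre hre]
  · have h3 : 3*x^2 - y^2 + 2*a*x + b = 0 := by
      have hyy : y * (3*x^2 - y^2 + 2*a*x + b) = y * 0 := by
        rw [mul_zero]; linear_combination h2
      exact mul_left_cancel₀ h hyy
    have key : -8*x^3 - 8*a*x^2 - (2*b+2*a^2)*x + (c - a*b) = 0 := by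
      linear_combination h1 - (3*x+a)*h3
    nlinarith [mul_nonneg (mul_nonneg hre hre) hre, mul_nonneg hre hre,
      mul_nonneg (mul_nonneg ha.le hre) hre, mul_nonneg hb.le hre,
      mul_nonneg (mul_nonneg ha.le ha.le) hre]

/-- The Routh–Hurwitz inequalities for the infected-equilibrium Jacobian. -/
private lemma hcv_aux (rT rI dT dI q c Tmax Ts Is u v A g w B r D : ℝ)
    (hrT : 0 < rT) (hrI : 0 < rI) (hdT : 0 < dT) (hdI : 0 < dI) (hq : 0 < q)
    (hc : 0 < c) (hTmax : 0 < Tmax) (hTs : 0 < Ts) (hIs : 0 < Is)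
    (hv : 0 < v) (hu0 : 0 < u)
    (hdel : dI + q = dT)
    (hD : D = rT*Ts + rI*Is + dT*Tmax)
    (hu : D * u = q * Is)
    (huT : u * Tmax = Ts + Is - Tmax)
    (hw : w = dT + rI*u)
    (hvw : v * Ts = w * Is)
    (hA : A * (Ts * Tmax) = dT*Tmax^2 + q*Is*Tmax + rT*Ts^2)
    (hg : g * Tmax = rI * Is)
    (hB : B = w + g) (hr : r * Tmax = q * Tmax - rT * Ts) :
    0 < A + B + c ∧
    0 < c*(A*B - r*(v-g)) + c*w*(v - g - A) ∧
    c*(A*B - r*(v-g)) + c*w*(v - g - A)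
      < (A+B+c) * (A*B - r*(v-g) + A*c + B*c - c*w) := by
  have hD0 : 0 < D := by rw [hD]; positivity
  have hw0 : 0 < w := by rw [hw]; positivity
  have hg0 : 0 < g := hcv_pos_left_of_mul hTmax (by rw [hg]; positivity)
  have hA0 : 0 < A := hcv_pos_left_of_mul (mul_pos hTs hTmax) (by rw [hA]; positivity)
  have hB0 : 0 < B := by rw [hB]; positivity
  have h1 : u * (dT*Tmax + rI*Is) * D = q*Is*(dT*Tmax + rI*Is) := by
    linear_combination (dT*Tmax + rI*Is) * hu
  have h2 : u * (dT*Tmax + rI*Is) < q * Is := by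
    have hXD : q*Is*(dT*Tmax + rI*Is) < q*Is*D := by
      have : dT*Tmax + rI*Is < D := by rw [hD]; nlinarith [mul_pos hrT hTs]
      exact mul_lt_mul_of_pos_left this (mul_pos hq hIs)
    have h3 : u*(dT*Tmax+rI*Is)*D < q*Is*D := by rw [h1]; exact hXD
    exact lt_of_mul_lt_mul_right h3 hD0.le
  have expand : (A - v)*(Ts*Tmax)
      = dT*Tmax*Ts + q*Is*Tmax + rT*Ts^2 - u*Tmax*(dT*Tmax+rI*Is) := by
    linear_combination hA - Tmax*hvw - Is*Tmax*hw + dT*Tmax*huT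
  have hAv : v < A := by
    have h4 : 0 < (A - v)*(Ts*Tmax) := by
      rw [expand]
      nlinarith [mul_pos hTmax (sub_pos.2 h2), mul_pos (mul_pos hdT hTmax) hTs,
        mul_pos hrT (mul_pos hTs hTs)]
    have := hcv_pos_left_of_mul (mul_pos hTs hTmax) h4
    linarith
  have hwr : 0 < w - r := by
    have hid : (w - r) * Tmax = dI*Tmax + rI*u*Tmax + rT*Ts := by
      linear_combination -hr + Tmax*hw - Tmax*hdel
    refine hcv_pos_left_of_mul hTmax ?_
    rw [hid]; positivity
  have hE : 0 < A + r - w := by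
    have hid : (A + r - w) * (Ts * Tmax * D)
        = Tmax * (dT*D*Is + q*Is*(D - dT*Tmax) + q*Ts*(D - rI*Is)) := by
      linear_combination D*hA + Ts*D*hr - Ts*Tmax*D*hw + dT*Tmax*D*huT
        - (dT*Tmax^2 + rI*Ts*Tmax)*hu
    have hDd : 0 < D - dT*Tmax := by
      rw [hD]; nlinarith [mul_pos hrT hTs, mul_pos hrI hIs]
    have hDr : 0 < D - rI*Is := by
      rw [hD]; nlinarith [mul_pos hrT hTs, mul_pos hdT hTmax]
    refine hcv_pos_left_of_mul (show (0:ℝ) < Ts*Tmax*D by positivity) ?_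
    rw [hid]
    have : 0 < dT*D*Is + q*Is*(D - dT*Tmax) + q*Ts*(D - rI*Is) := by
      nlinarith [mul_pos (mul_pos hdT hD0) hIs, mul_pos (mul_pos hq hIs) hDd,
        mul_pos (mul_pos hq hTs) hDr]
    positivity
  refine ⟨by positivity, ?_, ?_⟩
  · have hinner : c*(A*B - r*(v-g)) + c*w*(v - g - A)
        = c*(g*(A + r - w) + v*(w - r)) := by
      linear_combination (c*A)*hB
    rw [hinner]
    have h3 : 0 < g*(A + r - w) + v*(w - r) := by
      nlinarith [mul_pos hg0 hE, mul_pos hv hwr]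
    positivity
  · have hAr : q - r < A := by
      have hid : (A - (q - r)) * (Ts*Tmax) = dT*Tmax^2 + q*Is*Tmax := by
        linear_combination hA + Ts*hr
      have := hcv_pos_left_of_mul (mul_pos hTs hTmax) (by rw [hid]; positivity)
      linarith
    have hAq : q*Is < A*Ts := by
      have h5 : 0 < (A*Ts - q*Is)*Tmax := by
        have hid : (A*Ts - q*Is)*Tmax = dT*Tmax^2 + rT*Ts^2 := by linear_combination hA
        rw [hid]; positivity
      have := hcv_pos_left_of_mul hTmax h5
      linarith
    have hP : r*(v-g) < A*w + A*g := by
      rcases le_or_gt r 0 with h | h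
      · rcases le_or_gt v g with h' | h'
        · nlinarith [mul_pos hA0 hw0, mul_pos hA0 hg0, mul_pos hq hg0,
            mul_nonneg (neg_nonneg.2 h) hv.le]
        · nlinarith [mul_pos hA0 hw0, mul_pos hA0 hg0,
            mul_nonneg (neg_nonneg.2 h) (sub_pos.2 h').le]
      · rcases le_or_gt v g with h' | h'
        · nlinarith [mul_pos hA0 hw0, mul_pos hA0 hg0,
            mul_nonneg h.le (sub_nonneg.2 h')]
        · have hqv : q*v*Ts < A*w*Ts := by
            calc q*v*Ts = q*(w*Is) := by linear_combination q*hvw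
            _ < (A*Ts)*w := by nlinarith [mul_pos (sub_pos.2 hAq) hw0]
            _ = A*w*Ts := by ring
          have hqv' : q*v < A*w := lt_of_mul_lt_mul_right hqv hTs.le
          have hrq : r < q := by
            have h6 : r*Tmax < q*Tmax := by
              rw [hr]; nlinarith [mul_pos hrT hTs]
            exact lt_of_mul_lt_mul_right h6 hTmax.le
          have t3 : r*v < q*v := mul_lt_mul_of_pos_right hrq hv
          have t4 : 0 < r*g := mul_pos h hg0
          have t5 : 0 < A*g := mul_pos hA0 hg0
          linarith [t3, t4, t5, hqv']
    have hABP : r*(v-g) < A*B := by rw [hB]; linarith [hP]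
    have ha1 : 0 < A*B - r*(v-g) + A*c + B*c - c*w := by
      have hcg : B*c - c*w = c*g := by rw [hB]; ring
      have := mul_pos hA0 hc
      have := mul_pos hc hg0
      linarith [hABP, hcg]
    have hchunk : 0 < (c+w)*(A+g) - w*v := by
      linarith [mul_pos hw0 (sub_pos.2 hAv), mul_pos hc hA0, mul_pos hc hg0,
        mul_pos hw0 hg0]
    have hkey : (A+B+c) * (A*B - r*(v-g) + A*c + B*c - c*w)
        - (c*(A*B - r*(v-g)) + c*w*(v - g - A))
        = (A+B)*(A*B - r*(v-g) + A*c + B*c - c*w) + c*((c+w)*(A+g) - w*v) := by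
      linear_combination (c*c)*hB
    have t1 : 0 < (A+B)*(A*B - r*(v-g) + A*c + B*c - c*w) :=
      mul_pos (by positivity) ha1
    have t2 : 0 < c*((c+w)*(A+g) - w*v) := mul_pos hc hchunk
    linarith [hkey, t1, t2]

/-- `(T, I, V)` is an equilibrium point of the HCV system. -/
def hcvEquil (s rT rI dT dI Tmax β p q c η ε : ℝ) (T I V : ℝ) : Prop :=
  s + rT * T * (1 - (T + I) / Tmax) - dT * T - (1 - η) * β * V * T + q * I = 0 ∧
  rI * I * (1 - (T + I) / Tmax) + (1 - η) * β * V * T - dI * I - q * I = 0 ∧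
  (1 - ε) * p * I - c * V = 0

/-- The uninfected equilibrium value `T⁰`. -/
noncomputable def hcvT0 (s rT dT Tmax : ℝ) : ℝ :=
  Tmax / (2 * rT) * (rT - dT + Real.sqrt ((rT - dT) ^ 2 + 4 * rT * s / Tmax))

/-- The basic reproduction number `R₀` (with `1 - θ = (1-ε)(1-η)`). -/
noncomputable def hcvR0 (s rT rI dT dI Tmax β p q c η ε : ℝ) : ℝ :=
  rI / (dI + q) * (1 - hcvT0 s rT dT Tmax / Tmax)
    + (1 - ε) * (1 - η) * β * p * hcvT0 s rT dT Tmax / (c * (dI + q))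

/-- Local asymptotic stability of the infected equilibrium: when
`s = d_T T_max`, `δ = d_T` and `R₀ > 1`, all eigenvalues of the Jacobian
at the positive equilibrium have negative real part. -/
theorem hcv_infected_local_stability
    (s rT rI dT dI Tmax β p q c η ε : ℝ)
    (hs : 0 < s) (hrT : 0 < rT) (hrI : 0 < rI) (hdT : 0 < dT) (hdI : 0 < dI)
    (hTmax : 0 < Tmax) (hβ : 0 < β) (hp : 0 < p) (hq : 0 < q) (hc : 0 < c)
    (hη : η ∈ Set.Ico (0 : ℝ) 1) (hε : ε ∈ Set.Ico (0 : ℝ) 1)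
    (hrIT : rI ≤ rT)
    (hsdT : s = dT * Tmax) (hδ : dI + q = dT)
    (hR0 : 1 < hcvR0 s rT rI dT dI Tmax β p q c η ε)
    (Ts Is Vs : ℝ) (hTs : 0 < Ts) (hIs : 0 < Is) (hVs : 0 < Vs)
    (heq : hcvEquil s rT rI dT dI Tmax β p q c η ε Ts Is Vs)
    (J : Matrix (Fin 3) (Fin 3) ℝ)
    (hJ : J = !![rT * (1 - (2 * Ts + Is) / Tmax) - dT - (1 - η) * β * Vs,
                 -(rT * Ts / Tmax) + q,
                 -((1 - η) * β * Ts);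
                 -(rI * Is / Tmax) + (1 - η) * β * Vs,
                 rI * (1 - (Ts + 2 * Is) / Tmax) - dI - q,
                 (1 - η) * β * Ts;
                 0, (1 - ε) * p, -c]) :
    ∀ z ∈ spectrum ℂ (J.map (Complex.ofReal)), z.re < 0 := by
  obtain ⟨e1, e2, e3⟩ := heq
  obtain ⟨hη0, hη1⟩ := hη
  obtain ⟨hε0, hε1⟩ := hε
  subst hsdT
  have hdI2 : dI = dT - q := by linarith
  subst hdI2
  subst hJ
  have hdIq : 0 < dT - q := hdI
  have hTm := hTmax.ne'
  have hTs' := hTs.ne'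
  have e1' : dT*Tmax*Tmax + rT*Ts*(Tmax - (Ts+Is)) - dT*Ts*Tmax
      - (1-η)*β*Vs*Ts*Tmax + q*Is*Tmax = 0 := by
    field_simp at e1
    linear_combination e1
  have e2' : rI*Is*(Tmax - (Ts+Is)) + (1-η)*β*Vs*Ts*Tmax - (dT-q)*Is*Tmax
      - q*Is*Tmax = 0 := by
    field_simp at e2
    linear_combination e2
  have hu : (rT*Ts + rI*Is + dT*Tmax) * ((Ts+Is)/Tmax - 1) = q * Is := by
    field_simp
    linear_combination -e1' - e2'
  have huT : ((Ts+Is)/Tmax - 1) * Tmax = Ts + Is - Tmax := by field_simp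
  have hvw : ((1-η)*β*Vs) * Ts = (dT + rI*((Ts+Is)/Tmax - 1)) * Is := by
    field_simp
    linear_combination e2'
  have hA : ((dT*Tmax + q*Is)/Ts + rT*Ts/Tmax) * (Ts * Tmax)
      = dT*Tmax^2 + q*Is*Tmax + rT*Ts^2 := by
    field_simp
    all_goals ring
  have hg : (rI*Is/Tmax) * Tmax = rI * Is := by field_simp
  have hr : (q - rT*Ts/Tmax) * Tmax = q * Tmax - rT * Ts := by
    field_simp
    all_goals ring
  have hcw : ((1-ε)*p)*((1-η)*β*Ts) = c * (dT + rI*((Ts+Is)/Tmax - 1)) := by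
    have h9 : ((1-ε)*p)*((1-η)*β*Ts)*(Vs*Is)
        = (c * (dT + rI*((Ts+Is)/Tmax - 1)))*(Vs*Is) := by
      have h8 : (1-ε)*p*Is = c*Vs := by linarith
      calc ((1-ε)*p)*((1-η)*β*Ts)*(Vs*Is)
          = ((1-ε)*p*Is)*(((1-η)*β*Vs)*Ts) := by ring
        _ = (c*Vs)*((dT + rI*((Ts+Is)/Tmax - 1)) * Is) := by rw [h8, hvw]
        _ = (c * (dT + rI*((Ts+Is)/Tmax - 1)))*(Vs*Is) := by ring
    exact mul_right_cancel₀ (by positivity) h9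
  have hu0 : 0 < (Ts+Is)/Tmax - 1 := by
    refine hcv_pos_left_of_mul (show (0:ℝ) < rT*Ts + rI*Is + dT*Tmax by positivity) ?_
    rw [mul_comm, hu]; exact mul_pos hq hIs
  -- rewrite the Jacobian
  have h00 : rT * (1 - (2 * Ts + Is) / Tmax) - dT - (1 - η) * β * Vs
      = -((dT*Tmax + q*Is)/Ts + rT*Ts/Tmax) := by
    field_simp
    linear_combination e1'
  have h01 : -(rT * Ts / Tmax) + q = q - rT*Ts/Tmax := by ring
  have h10 : -(rI * Is / Tmax) + (1 - η) * β * Vs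
      = (1-η)*β*Vs - rI*Is/Tmax := by ring
  have h11 : rI * (1 - (Ts + 2 * Is) / Tmax) - (dT - q) - q
      = -((dT + rI*((Ts+Is)/Tmax - 1)) + rI*Is/Tmax) := by
    field_simp
    all_goals ring
  have hMeq : (!![rT * (1 - (2 * Ts + Is) / Tmax) - dT - (1 - η) * β * Vs,
                 -(rT * Ts / Tmax) + q,
                 -((1 - η) * β * Ts);
                 -(rI * Is / Tmax) + (1 - η) * β * Vs,
                 rI * (1 - (Ts + 2 * Is) / Tmax) - (dT - q) - q,
                 (1 - η) * β * Ts;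
                 0, (1 - ε) * p, -c] : Matrix (Fin 3) (Fin 3) ℝ)
      = !![-((dT*Tmax + q*Is)/Ts + rT*Ts/Tmax),
           q - rT*Ts/Tmax,
           -((1 - η) * β * Ts);
           (1-η)*β*Vs - rI*Is/Tmax,
           -((dT + rI*((Ts+Is)/Tmax - 1)) + rI*Is/Tmax),
           (1 - η) * β * Ts;
           0, (1 - ε) * p, -c] := by
    rw [h00, h01, h10, h11]
  intro z hz
  rw [hMeq] at hz
  rw [spectrum.mem_iff] at hz
  rw [Algebra.algebraMap_eq_smul_one, Matrix.isUnit_iff_isUnit_det, isUnit_iff_ne_zero,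
    not_not] at hz
  rw [Matrix.det_fin_three] at hz
  simp only [Matrix.sub_apply, Matrix.smul_apply, Matrix.one_apply, Matrix.map_apply,
    Matrix.cons_val', Matrix.cons_val_zero, Matrix.cons_val_one, Matrix.head_cons,
    Matrix.empty_val', Matrix.cons_val_fin_one, Matrix.head_fin_const,
    Matrix.cons_val_two, Matrix.tail_cons,
    Matrix.of_apply, smul_eq_mul, Fin.reduceEq, if_false, if_true, reduceIte] at hz
  -- the characteristic cubic
  have hcubic : z^3
      + ((((dT*Tmax + q*Is)/Ts + rT*Ts/Tmax)
          + ((dT + rI*((Ts+Is)/Tmax - 1)) + rI*Is/Tmax) + c : ℝ) : ℂ)*z^2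
      + ((((dT*Tmax + q*Is)/Ts + rT*Ts/Tmax) * ((dT + rI*((Ts+Is)/Tmax - 1)) + rI*Is/Tmax)
          - (q - rT*Ts/Tmax)*((1-η)*β*Vs - rI*Is/Tmax)
          + ((dT*Tmax + q*Is)/Ts + rT*Ts/Tmax)*c
          + ((dT + rI*((Ts+Is)/Tmax - 1)) + rI*Is/Tmax)*c
          - ((1-ε)*p)*((1-η)*β*Ts) : ℝ) : ℂ)*z
      + ((c*(((dT*Tmax + q*Is)/Ts + rT*Ts/Tmax) * ((dT + rI*((Ts+Is)/Tmax - 1)) + rI*Is/Tmax)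
            - (q - rT*Ts/Tmax)*((1-η)*β*Vs - rI*Is/Tmax))
          + ((1-ε)*p)*((1-η)*β*Ts)*((1-η)*β*Vs - rI*Is/Tmax
            - (((dT*Tmax + q*Is)/Ts + rT*Ts/Tmax))) : ℝ) : ℂ) = 0 := by
    push_cast at hz
    push_cast
    linear_combination hz
  obtain ⟨H2, H0, H01⟩ := hcv_aux rT rI dT (dT - q) q c Tmax Ts Is
    ((Ts+Is)/Tmax - 1) ((1-η)*β*Vs)
    ((dT*Tmax + q*Is)/Ts + rT*Ts/Tmax) (rI*Is/Tmax)
    (dT + rI*((Ts+Is)/Tmax - 1))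
    ((dT + rI*((Ts+Is)/Tmax - 1)) + rI*Is/Tmax)
    (q - rT*Ts/Tmax) (rT*Ts + rI*Is + dT*Tmax)
    hrT hrI hdT hdIq hq hc hTmax hTs hIs
    (mul_pos (mul_pos (by linarith : (0:ℝ) < 1 - η) hβ) hVs) hu0
    (by ring) rfl hu huT rfl hvw hA hg rfl hr
  rw [← hcw] at H0 H01
  exact hcv_routh_hurwitz_cubic _ _ _ H2 H0 H01 z hcubic
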